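/- Assume P, H, V, Θ and Ô are as in the context, and assume additionally the generic-points property: for every h ∈ H and v ∈ V with h ∩ v ≠ ∅ there exists a point of h ∩ v belonging to no member of H ∪ V other than h and v. Then there exist p, q ∈ P with rld(p,q) ≥ ôdiam − 2, where ôdiam is the maximum of Ô(i,j) over all vertices i, j of Θ; consequently diam(P) ≥ ôdiam − 2. -/

import Mathlib

/-- A segment with endpoints `p` and `q` is axis-parallel: horizontal (equal
`y`-coordinates) or vertical (equal `x`-coordinates). -/
def AxisParallel (p q : ℝ × ℝ) : Prop := p.2 = q.2 ∨ p.1 = q.1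

/-- `f` describes a rectilinear path from `p` to `q` in `P` with `k ≥ 1` links:
`f 0 = p`, `f k = q`, and each closed segment from `f t` to `f (t+1)` is contained
in `P` and is axis-parallel. -/
def IsRectPath (P : Set (ℝ × ℝ)) (p q : ℝ × ℝ) (k : ℕ) (f : ℕ → ℝ × ℝ) : Prop :=
  1 ≤ k ∧ f 0 = p ∧ f k = q ∧
    ∀ t < k, segment ℝ (f t) (f (t + 1)) ⊆ P ∧ AxisParallel (f t) (f (t + 1))

/-- The rectilinear link distance: the minimum link length of a rectilinear path
from `p` to `q` in `P`. -/
noncomputable def rld (P : Set (ℝ × ℝ)) (p q : ℝ × ℝ) : ℕ :=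
  sInf {k : ℕ | ∃ f : ℕ → ℝ × ℝ, IsRectPath P p q k f}

/-- A box: a closed axis-aligned rectangle `[a,b] × [c,d]` with `a < b` and `c < d`. -/
def IsBox (B : Set (ℝ × ℝ)) : Prop :=
  ∃ a b c d : ℝ, a < b ∧ c < d ∧ B = Set.Icc a b ×ˢ Set.Icc c d

/-- The graph of oriented distances `Θ`: the bipartite graph on the (disjoint) union of
the families `H` and `V`, with an edge between `h ∈ H` and `v ∈ V` exactly when
`h ∩ v ≠ ∅`. -/
def thetaGraph (H V : Set (Set (ℝ × ℝ))) :
    SimpleGraph {B : Set (ℝ × ℝ) // B ∈ H ∪ V} where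
  Adj x y := x ≠ y ∧
    ((x.1 ∈ H ∧ y.1 ∈ V) ∨ (x.1 ∈ V ∧ y.1 ∈ H)) ∧ (x.1 ∩ y.1).Nonempty
  symm := by
    constructor
    rintro x y ⟨hxy, hor, hne⟩
    refine ⟨hxy.symm, ?_, by rwa [Set.inter_comm]⟩
    rcases hor with ⟨h1, h2⟩ | ⟨h1, h2⟩
    · exact Or.inr ⟨h2, h1⟩
    · exact Or.inl ⟨h2, h1⟩
  loopless := by constructor; rintro x ⟨hxx, -⟩; exact hxx rfl

/-- The oriented distance `Ô(i,j)`: the graph distance in `Θ` plus one. -/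
noncomputable def oDist (H V : Set (Set (ℝ × ℝ)))
    (i j : {B : Set (ℝ × ℝ) // B ∈ H ∪ V}) : ℕ :=
  (thetaGraph H V).dist i j + 1

/-- `H` and `V` form a good decomposition of `P`: they are finite families of boxes
contained in `P`; every horizontal (resp. vertical) segment contained in `P` lies in
some member of `H` (resp. `V`); for `h ∈ H` and `v ∈ V` meeting each other, `h ∩ v`
is the product of the `x`-projection of `v` with the `y`-projection of `h`; and the
graph of oriented distances is connected. -/
structure GoodDecomp (P : Set (ℝ × ℝ)) (H V : Set (Set (ℝ × ℝ))) : Prop where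
  finH : H.Finite
  finV : V.Finite
  box : ∀ B ∈ H ∪ V, IsBox B
  sub : ∀ B ∈ H ∪ V, B ⊆ P
  covH : ∀ p q : ℝ × ℝ, p.2 = q.2 → segment ℝ p q ⊆ P → ∃ h ∈ H, segment ℝ p q ⊆ h
  covV : ∀ p q : ℝ × ℝ, p.1 = q.1 → segment ℝ p q ⊆ P → ∃ v ∈ V, segment ℝ p q ⊆ v
  cross : ∀ h ∈ H, ∀ v ∈ V, (h ∩ v).Nonempty →
    h ∩ v = (Prod.fst '' v) ×ˢ (Prod.snd '' h)
  conn : (thetaGraph H V).Connected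

/-- `ôdiam`: the maximum of `Ô(i,j)` over all vertices `i, j` of `Θ`. -/
noncomputable def oDiamTheta (H V : Set (Set (ℝ × ℝ))) : ℕ :=
  sSup {m : ℕ | ∃ i j : {B : Set (ℝ × ℝ) // B ∈ H ∪ V}, oDist H V i j = m}

/-- `diam(P)`: the supremum of `rld(p,q)` over all `p, q ∈ P`. -/
noncomputable def rldDiam (P : Set (ℝ × ℝ)) : ℕ :=
  sSup {m : ℕ | ∃ p ∈ P, ∃ q ∈ P, rld P p q = m}

-- segment splitting, horizontal
lemma seg_split_h {p q r : ℝ × ℝ} (h1 : p.2 = q.2) (h2 : q.2 = r.2) :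
    segment ℝ p r ⊆ segment ℝ p q ∪ segment ℝ q r := by
  intro z hz
  obtain ⟨a, b, ha, hb, hab, hz⟩ := hz
  have hz1 : a * p.1 + b * r.1 = z.1 := by rw [← hz]; rfl
  have hz2 : z.2 = p.2 := by
    have : a * p.2 + b * r.2 = z.2 := by rw [← hz]; rfl
    rw [← this, h1, h2]; linear_combination r.2 * hab
  have hx : z.1 ∈ segment ℝ p.1 r.1 := ⟨a, b, ha, hb, hab, by simpa [smul_eq_mul] using hz1⟩
  rw [segment_eq_uIcc] at hx
  have := Set.uIcc_subset_uIcc_union_uIcc (a := p.1) (b := q.1) (c := r.1) hx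
  rcases this with h | h
  · left
    rw [← segment_eq_uIcc] at h
    obtain ⟨a', b', ha', hb', hab', he⟩ := h
    refine ⟨a', b', ha', hb', hab', ?_⟩
    ext
    · simpa [smul_eq_mul] using he
    · show a' * p.2 + b' * q.2 = z.2
      rw [hz2, ← h1]; linear_combination p.2 * hab'
  · right
    rw [← segment_eq_uIcc] at h
    obtain ⟨a', b', ha', hb', hab', he⟩ := h
    refine ⟨a', b', ha', hb', hab', ?_⟩
    ext
    · simpa [smul_eq_mul] using he
    · show a' * q.2 + b' * r.2 = z.2
      rw [hz2, h1, ← h2]; linear_combination q.2 * hab'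

-- segment splitting, vertical
lemma seg_split_v {p q r : ℝ × ℝ} (h1 : p.1 = q.1) (h2 : q.1 = r.1) :
    segment ℝ p r ⊆ segment ℝ p q ∪ segment ℝ q r := by
  intro z hz
  obtain ⟨a, b, ha, hb, hab, hz⟩ := hz
  have hz1 : a * p.2 + b * r.2 = z.2 := by rw [← hz]; rfl
  have hz2 : z.1 = p.1 := by
    have : a * p.1 + b * r.1 = z.1 := by rw [← hz]; rfl
    rw [← this, h1, h2]; linear_combination r.1 * hab
  have hx : z.2 ∈ segment ℝ p.2 r.2 := ⟨a, b, ha, hb, hab, by simpa [smul_eq_mul] using hz1⟩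
  rw [segment_eq_uIcc] at hx
  have := Set.uIcc_subset_uIcc_union_uIcc (a := p.2) (b := q.2) (c := r.2) hx
  rcases this with h | h
  · left
    rw [← segment_eq_uIcc] at h
    obtain ⟨a', b', ha', hb', hab', he⟩ := h
    refine ⟨a', b', ha', hb', hab', ?_⟩
    ext
    · show a' * p.1 + b' * q.1 = z.1
      rw [hz2, ← h1]; linear_combination p.1 * hab'
    · simpa [smul_eq_mul] using he
  · right
    rw [← segment_eq_uIcc] at h
    obtain ⟨a', b', ha', hb', hab', he⟩ := h
    refine ⟨a', b', ha', hb', hab', ?_⟩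
    ext
    · show a' * q.1 + b' * r.1 = z.1
      rw [hz2, h1, ← h2]; linear_combination q.1 * hab'
    · simpa [smul_eq_mul] using he

-- 2-link path within a box
lemma box_two_path {P B : Set (ℝ × ℝ)} (hB : IsBox B) (hBP : B ⊆ P) {p q : ℝ × ℝ}
    (hp : p ∈ B) (hq : q ∈ B) : ∃ f, IsRectPath P p q 2 f := by
  obtain ⟨a, b, c, d, hab, hcd, rfl⟩ := hB
  have hconv : Convex ℝ (Set.Icc a b ×ˢ Set.Icc c d) := (convex_Icc a b).prod (convex_Icc c d)
  have hm : (q.1, p.2) ∈ Set.Icc a b ×ˢ Set.Icc c d := ⟨hq.1, hp.2⟩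
  refine ⟨fun t => if t = 0 then p else if t = 1 then (q.1, p.2) else q,
    one_le_two, rfl, rfl, ?_⟩
  intro t ht
  interval_cases t
  · exact ⟨(hconv.segment_subset hp hm).trans hBP, Or.inl rfl⟩
  · exact ⟨(hconv.segment_subset hm hq).trans hBP, Or.inr rfl⟩

-- concatenation of rectilinear paths
lemma path_append {P : Set (ℝ × ℝ)} {p r q : ℝ × ℝ} {k m : ℕ} {f g : ℕ → ℝ × ℝ}
    (hf : IsRectPath P p r k f) (hg : IsRectPath P r q m g) :
    IsRectPath P p q (k + m) (fun t => if t < k then f t else g (t - k)) := by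
  obtain ⟨hk1, hf0, hfk, hfseg⟩ := hf
  obtain ⟨hm1, hg0, hgm, hgseg⟩ := hg
  have hval : ∀ t, (if t < k then f t else g (t - k)) = if t ≤ k then f t else g (t - k) := by
    intro t
    rcases lt_trichotomy t k with h | h | h
    · simp [h, le_of_lt h]
    · subst h; simp [hfk, hg0]
    · have h1 : ¬ t < k := by omega
      have h2 : ¬ t ≤ k := by omega
      simp [h1, h2]
  refine ⟨by omega, by beta_reduce; rw [if_pos (by omega : 0 < k)]; exact hf0, ?_, ?_⟩
  · have h1 : ¬ k + m < k := by omega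
    have hk : k + m - k = m := by omega
    beta_reduce
    rw [if_neg h1, hk, hgm]
  · intro t ht
    by_cases h : t < k
    · have e1 : (if t < k then f t else g (t - k)) = f t := if_pos h
      have e2 : (if t + 1 < k then f (t + 1) else g (t + 1 - k)) = f (t + 1) := by
        rw [hval]; exact if_pos h
      simp only [e1, e2]
      exact hfseg t h
    · have e1 : (if t < k then f t else g (t - k)) = g (t - k) := if_neg h
      have e2 : (if t + 1 < k then f (t + 1) else g (t + 1 - k)) = g (t - k + 1) := by
        have h1 : ¬ t + 1 < k := by omega
        have h2 : t + 1 - k = t - k + 1 := by omega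
        rw [if_neg h1, h2]
      simp only [e1, e2]
      exact hgseg (t - k) (by omega)

-- distance bounded along an adjacency chain
lemma chain_dist {α : Type*} {G : SimpleGraph α} (hconn : G.Connected) (B : ℕ → α) :
    ∀ n : ℕ, (∀ t < n, B t = B (t + 1) ∨ G.Adj (B t) (B (t + 1))) →
      G.dist (B 0) (B n) ≤ n := by
  intro n
  induction n with
  | zero => simp
  | succ n ih =>
    intro h
    have h1 := ih (fun t ht => h t (by omega))
    have h2 : G.dist (B n) (B (n + 1)) ≤ 1 := by
      rcases h n (by omega) with he | ha
      · rw [he, SimpleGraph.dist_self]; omega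
      · have := SimpleGraph.dist_le (SimpleGraph.Walk.cons ha SimpleGraph.Walk.nil)
        simpa using this
    calc G.dist (B 0) (B (n + 1)) ≤ G.dist (B 0) (B n) + G.dist (B n) (B (n + 1)) :=
          hconn.dist_triangle
      _ ≤ n + 1 := by omega

-- existence of a rectilinear path along a walk in Θ
lemma walk_upper {P : Set (ℝ × ℝ)} {H V : Set (Set (ℝ × ℝ))} (hgood : GoodDecomp P H V) :
    ∀ {u v : {B : Set (ℝ × ℝ) // B ∈ H ∪ V}} (w : (thetaGraph H V).Walk u v)
      (p q : ℝ × ℝ), p ∈ u.1 → q ∈ v.1 →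
      ∃ f, IsRectPath P p q (2 * w.length + 2) f := by
  intro u v w
  induction w with
  | @nil a =>
    intro p q hp hq
    obtain ⟨f, hf⟩ := box_two_path (hgood.box _ a.2) (hgood.sub _ a.2) hp hq
    exact ⟨f, hf⟩
  | @cons a b c ha w ih =>
    intro p q hp hq
    obtain ⟨x, hxu, hxm⟩ := ha.2.2
    obtain ⟨f, hf⟩ := box_two_path (hgood.box _ a.2) (hgood.sub _ a.2) hp hxu
    obtain ⟨g, hg⟩ := ih x q hxm hq
    have hc := path_append hf hg
    refine ⟨fun t => if t < 2 then f t else g (t - 2), ?_⟩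
    have he : 2 * (SimpleGraph.Walk.cons ha w).length + 2 = 2 + (2 * w.length + 2) := by
      simp [SimpleGraph.Walk.length_cons]; ring
    rw [he]
    exact hc

-- key lower-bound lemma: a rectilinear path of length k yields boxes A ∋ p, C ∋ q
-- at Θ-distance at most k - 1
lemma key_lemma {P : Set (ℝ × ℝ)} {H V : Set (Set (ℝ × ℝ))} (hgood : GoodDecomp P H V) :
    ∀ (k : ℕ) (f : ℕ → ℝ × ℝ) (p q : ℝ × ℝ), IsRectPath P p q k f →
      ∃ A C : {B : Set (ℝ × ℝ) // B ∈ H ∪ V}, p ∈ A.1 ∧ q ∈ C.1 ∧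
        (thetaGraph H V).dist A C ≤ k - 1 := by
  intro k
  induction k using Nat.strong_induction_on with
  | _ k ih =>
  intro f p q hf
  obtain ⟨hk1, hf0, hfk, hseg⟩ := hf
  by_cases hmerge : ∃ t, t + 2 ≤ k ∧
      (((f t).2 = (f (t+1)).2 ∧ (f (t+1)).2 = (f (t+2)).2) ∨
       ((f t).1 = (f (t+1)).1 ∧ (f (t+1)).1 = (f (t+2)).1))
  · -- merge two consecutive collinear segments
    obtain ⟨t, ht, hcol⟩ := hmerge
    have hg : IsRectPath P p q (k - 1) (fun s => if s ≤ t then f s else f (s + 1)) := by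
      refine ⟨by omega, ?_, ?_, ?_⟩
      · beta_reduce; rw [if_pos (by omega : 0 ≤ t)]; exact hf0
      · beta_reduce; rw [if_neg (by omega : ¬ k - 1 ≤ t)]
        have : k - 1 + 1 = k := by omega
        rw [this, hfk]
      · intro s hs
        by_cases h1 : s < t
        · have e1 : (if s ≤ t then f s else f (s+1)) = f s := if_pos (by omega)
          have e2 : (if s + 1 ≤ t then f (s+1) else f (s+2)) = f (s+1) := if_pos (by omega)
          simp only [e1, e2]
          exact hseg s (by omega)
        by_cases h2 : s = t
        · subst h2
          have e1 : (if s ≤ s then f s else f (s+1)) = f s := if_pos le_rfl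
          have e2 : (if s + 1 ≤ s then f (s+1) else f (s+2)) = f (s+2) := if_neg (by omega)
          simp only [e1, e2]
          have hs1 := hseg s (by omega)
          have hs2 := hseg (s+1) (by omega)
          rcases hcol with ⟨hy1, hy2⟩ | ⟨hx1, hx2⟩
          · exact ⟨(seg_split_h hy1 hy2).trans (Set.union_subset hs1.1 hs2.1),
              Or.inl (hy1.trans hy2)⟩
          · exact ⟨(seg_split_v hx1 hx2).trans (Set.union_subset hs1.1 hs2.1),
              Or.inr (hx1.trans hx2)⟩
        · have e1 : (if s ≤ t then f s else f (s+1)) = f (s+1) := if_neg (by omega)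
          have e2 : (if s + 1 ≤ t then f (s+1) else f (s+2)) = f (s+2) := if_neg (by omega)
          simp only [e1, e2]
          exact hseg (s+1) (by omega)
    obtain ⟨A, C, hA, hC, hd⟩ := ih (k - 1) (by omega) _ p q hg
    exact ⟨A, C, hA, hC, hd.trans (by omega)⟩
  · -- alternating case
    push_neg at hmerge
    have hvert : Nonempty {B : Set (ℝ × ℝ) // B ∈ H ∪ V} := hgood.conn.nonempty
    have hchoice : ∀ t : ℕ, ∃ A : {B : Set (ℝ × ℝ) // B ∈ H ∪ V}, t < k →
        segment ℝ (f t) (f (t+1)) ⊆ A.1 ∧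
        ((A.1 ∈ H ∧ (f t).2 = (f (t+1)).2) ∨
         (A.1 ∈ V ∧ (f t).1 = (f (t+1)).1 ∧ ¬ (f t).2 = (f (t+1)).2)) := by
      intro t
      by_cases ht : t < k
      · obtain ⟨hsub, hpar⟩ := hseg t ht
        by_cases hy : (f t).2 = (f (t+1)).2
        · obtain ⟨h, hH, hsub'⟩ := hgood.covH _ _ hy hsub
          exact ⟨⟨h, Or.inl hH⟩, fun _ => ⟨hsub', Or.inl ⟨hH, hy⟩⟩⟩
        · have hx : (f t).1 = (f (t+1)).1 := hpar.resolve_left hy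
          obtain ⟨v, hV, hsub'⟩ := hgood.covV _ _ hx hsub
          exact ⟨⟨v, Or.inr hV⟩, fun _ => ⟨hsub', Or.inr ⟨hV, hx, hy⟩⟩⟩
      · exact ⟨hvert.some, fun h => absurd h ht⟩
    choose B hB using hchoice
    have hchain : ∀ t < k - 1, B t = B (t + 1) ∨ (thetaGraph H V).Adj (B t) (B (t + 1)) := by
      intro t ht
      obtain ⟨hsub1, hty1⟩ := hB t (by omega)
      obtain ⟨hsub2, hty2⟩ := hB (t + 1) (by omega)
      have hm1 : f (t + 1) ∈ (B t).1 := hsub1 (right_mem_segment ℝ _ _)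
      have hm2 : f (t + 1) ∈ (B (t + 1)).1 := hsub2 (left_mem_segment ℝ _ _)
      rcases hty1 with ⟨hH1, hy1⟩ | ⟨hV1, hx1, hny1⟩ <;>
        rcases hty2 with ⟨hH2, hy2⟩ | ⟨hV2, hx2, hny2⟩
      · exact absurd hy2 ((hmerge t (by omega)).1 hy1)
      · by_cases heq : B t = B (t + 1)
        · exact Or.inl heq
        · exact Or.inr ⟨heq, Or.inl ⟨hH1, hV2⟩, ⟨f (t + 1), hm1, hm2⟩⟩
      · by_cases heq : B t = B (t + 1)
        · exact Or.inl heq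
        · exact Or.inr ⟨heq, Or.inr ⟨hV1, hH2⟩, ⟨f (t + 1), hm1, hm2⟩⟩
      · exact absurd hx2 ((hmerge t (by omega)).2 hx1)
    refine ⟨B 0, B (k - 1), ?_, ?_, chain_dist hgood.conn B (k - 1) hchain⟩
    · have := (hB 0 (by omega)).1 (left_mem_segment ℝ (f 0) (f 1))
      rwa [hf0] at this
    · have := (hB (k - 1) (by omega)).1 (right_mem_segment ℝ (f (k-1)) (f (k-1+1)))
      have hk : k - 1 + 1 = k := by omega
      rw [hk, hfk] at this
      exact this

lemma exists_adj_of_ne {α : Type*} {G : SimpleGraph α} {u v : α}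
    (h : G.Reachable u v) (hne : u ≠ v) : ∃ w, G.Adj u w := by
  obtain ⟨p⟩ := h
  cases p with
  | nil => exact absurd rfl hne
  | cons ha _ => exact ⟨_, ha⟩

/-- Under the generic-points property, there exist `p, q ∈ P` with
`rld(p,q) ≥ ôdiam − 2`; consequently `diam(P) ≥ ôdiam − 2`. -/
theorem oDiam_sub_two_le_rld (P : Set (ℝ × ℝ)) (H V : Set (Set (ℝ × ℝ)))
    (hgood : GoodDecomp P H V)
    (hgen : ∀ h ∈ H, ∀ v ∈ V, (h ∩ v).Nonempty →
      ∃ x ∈ h ∩ v, ∀ B ∈ H ∪ V, x ∈ B → B = h ∨ B = v) :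
    (∃ p ∈ P, ∃ q ∈ P, oDiamTheta H V - 2 ≤ rld P p q) ∧
      oDiamTheta H V - 2 ≤ rldDiam P := by
  classical
  have hfin : (H ∪ V).Finite := hgood.finH.union hgood.finV
  haveI : Fintype {B : Set (ℝ × ℝ) // B ∈ H ∪ V} := hfin.fintype
  have hvert : Nonempty {B : Set (ℝ × ℝ) // B ∈ H ∪ V} := hgood.conn.nonempty
  set G := thetaGraph H V with hGdef
  have hdb : ∀ u v : {B : Set (ℝ × ℝ) // B ∈ H ∪ V},
      G.dist u v ≤ Fintype.card {B : Set (ℝ × ℝ) // B ∈ H ∪ V} := by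
    intro u v
    obtain ⟨w⟩ := hgood.conn.preconnected u v
    calc G.dist u v ≤ w.bypass.length := SimpleGraph.dist_le w.bypass
      _ ≤ _ := le_of_lt w.bypass_isPath.length_lt
  have hSne : {m : ℕ | ∃ i j, oDist H V i j = m}.Nonempty :=
    ⟨_, hvert.some, hvert.some, rfl⟩
  have hSbdd : BddAbove {m : ℕ | ∃ i j, oDist H V i j = m} := by
    refine ⟨Fintype.card {B : Set (ℝ × ℝ) // B ∈ H ∪ V} + 1, ?_⟩
    rintro m ⟨i, j, rfl⟩
    exact Nat.add_le_add_right (hdb i j) 1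
  obtain ⟨i, j, hij⟩ := Nat.sSup_mem hSne hSbdd
  have hOD : oDiamTheta H V = G.dist i j + 1 := hij.symm
  by_cases hD2 : G.dist i j < 2
  · obtain ⟨a, b, c, d, hab, hcd, hBe⟩ := hgood.box _ hvert.some.2
    have hp : ((a, c) : ℝ × ℝ) ∈ hvert.some.1 := by
      rw [hBe]; exact ⟨⟨le_refl a, le_of_lt hab⟩, ⟨le_refl c, le_of_lt hcd⟩⟩
    have hpP : ((a, c) : ℝ × ℝ) ∈ P := hgood.sub _ hvert.some.2 hp
    have h0 : oDiamTheta H V - 2 = 0 := by rw [hOD]; omega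
    exact ⟨⟨_, hpP, _, hpP, by rw [h0]; exact Nat.zero_le _⟩,
      by rw [h0]; exact Nat.zero_le _⟩
  · push_neg at hD2
    have hne : i ≠ j := by
      intro he; rw [he, SimpleGraph.dist_self] at hD2; omega
    have hgen' : ∀ u v : {B : Set (ℝ × ℝ) // B ∈ H ∪ V}, G.Adj u v →
        ∃ x, x ∈ u.1 ∧ ∀ B ∈ H ∪ V, x ∈ B → B = u.1 ∨ B = v.1 := by
      intro u v hadj
      rcases hadj.2.1 with ⟨huH, hvV⟩ | ⟨huV, hvH⟩
      · obtain ⟨x, hx, hxg⟩ := hgen u.1 huH v.1 hvV hadj.2.2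
        exact ⟨x, hx.1, hxg⟩
      · obtain ⟨x, hx, hxg⟩ := hgen v.1 hvH u.1 huV
          (by rw [Set.inter_comm]; exact hadj.2.2)
        exact ⟨x, hx.2, fun B hB hxB => (hxg B hB hxB).symm⟩
    obtain ⟨bi, hai⟩ := exists_adj_of_ne (hgood.conn.preconnected i j) hne
    obtain ⟨bj, haj⟩ := exists_adj_of_ne (hgood.conn.preconnected j i) hne.symm
    obtain ⟨p, hpi, hpg⟩ := hgen' i bi hai
    obtain ⟨q, hqj, hqg⟩ := hgen' j bj haj
    have hpP : p ∈ P := hgood.sub _ i.2 hpi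
    have hqP : q ∈ P := hgood.sub _ j.2 hqj
    have hSne' : {n : ℕ | ∃ f, IsRectPath P p q n f}.Nonempty := by
      obtain ⟨w⟩ := hgood.conn.preconnected i j
      obtain ⟨f, hf⟩ := walk_upper hgood w p q hpi hqj
      exact ⟨_, f, hf⟩
    have hrld : rld P p q = sInf {n : ℕ | ∃ f, IsRectPath P p q n f} := rfl
    obtain ⟨f, hf⟩ := Nat.sInf_mem hSne'
    rw [← hrld] at hf
    obtain ⟨A, C, hpA, hqC, hd⟩ := key_lemma hgood _ f p q hf
    have hk1 : 1 ≤ rld P p q := hf.1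
    have hdiA : G.dist i A ≤ 1 := by
      rcases hpg A.1 A.2 hpA with hA | hA
      · rw [Subtype.ext hA, SimpleGraph.dist_self]; omega
      · rw [Subtype.ext hA]
        have := SimpleGraph.dist_le (SimpleGraph.Walk.cons hai SimpleGraph.Walk.nil)
        simpa using this
    have hdCj : G.dist C j ≤ 1 := by
      rcases hqg C.1 C.2 hqC with hC | hC
      · rw [Subtype.ext hC, SimpleGraph.dist_self]; omega
      · rw [Subtype.ext hC, SimpleGraph.dist_comm]
        have := SimpleGraph.dist_le (SimpleGraph.Walk.cons haj SimpleGraph.Walk.nil)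
        simpa using this
    have hd2 : G.dist A C ≤ rld P p q - 1 := hd
    have t1 : G.dist i j ≤ G.dist i A + G.dist A j := hgood.conn.dist_triangle
    have t2 : G.dist A j ≤ G.dist A C + G.dist C j := hgood.conn.dist_triangle
    have hineq : oDiamTheta H V - 2 ≤ rld P p q := by rw [hOD]; omega
    refine ⟨⟨p, hpP, q, hqP, hineq⟩, ?_⟩
    have hbdd2 : BddAbove {m : ℕ | ∃ p ∈ P, ∃ q ∈ P, rld P p q = m} := by
      refine ⟨2 * Fintype.card {B : Set (ℝ × ℝ) // B ∈ H ∪ V} + 2, ?_⟩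
      rintro m ⟨p', hp', q', hq', rfl⟩
      obtain ⟨h1, hH1, hsub1⟩ := hgood.covH p' p' rfl
        (by rw [segment_same]; exact Set.singleton_subset_iff.mpr hp')
      obtain ⟨h2, hH2, hsub2⟩ := hgood.covH q' q' rfl
        (by rw [segment_same]; exact Set.singleton_subset_iff.mpr hq')
      have hp'm : p' ∈ h1 := hsub1 (left_mem_segment ℝ p' p')
      have hq'm : q' ∈ h2 := hsub2 (left_mem_segment ℝ q' q')
      obtain ⟨w⟩ := hgood.conn.preconnected ⟨h1, Or.inl hH1⟩ ⟨h2, Or.inl hH2⟩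
      obtain ⟨f', hf'⟩ := walk_upper hgood w.bypass p' q' hp'm hq'm
      have hle : rld P p' q' ≤ 2 * w.bypass.length + 2 := Nat.sInf_le ⟨f', hf'⟩
      have hlen : w.bypass.length ≤ Fintype.card {B : Set (ℝ × ℝ) // B ∈ H ∪ V} :=
        le_of_lt w.bypass_isPath.length_lt
      omega
    exact hineq.trans (le_csSup hbdd2 ⟨p, hpP, q, hqP, rfl⟩)
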